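/- arXiv:1004.0532 — 6 statements merged into one kernel-verified Lean document; each statement's English description precedes it below -/
import Mathlib

section
/- Let G be a group, let X, Y, γ be elements of G, let n ≥ 1 be a natural number, and let I, J, K, L be natural numbers with I + J = n - 1 and K + L = n - 1. If γ·(XY)^I·X·γ⁻¹ = (YX)^L·Y and γ·(YX)^J·Y·γ⁻¹ = (XY)^K·X, then the element X·γ commutes with (XY)^n and the element Y·γ commutes with (YX)^n. -/
private lemma aux0 {G : Type*} [Group G] (a b : G) (j : ℕ) :
    a * (b * a) ^ j = (a * b) ^ j * a :=
  SemiconjBy.pow_right (by simp [SemiconjBy, mul_assoc]) j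

private lemma aux {G : Type*} [Group G] (a b : G) (i j : ℕ) :
    (a * b) ^ i * a * ((b * a) ^ j * b) = (a * b) ^ (i + j + 1) := by
  rw [mul_assoc ((a * b) ^ i), ← mul_assoc a, aux0]
  simp [pow_add, pow_succ, mul_assoc]

theorem stmt_0 (G : Type*) [Group G] (X Y γ : G) (n : ℕ) (hn : 1 ≤ n)
    (I J K L : ℕ) (hIJ : I + J = n - 1) (hKL : K + L = n - 1)
    (h1 : γ * (X * Y) ^ I * X * γ⁻¹ = (Y * X) ^ L * Y)
    (h2 : γ * (Y * X) ^ J * Y * γ⁻¹ = (X * Y) ^ K * X) :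
    Commute (X * γ) ((X * Y) ^ n) ∧ Commute (Y * γ) ((Y * X) ^ n) := by
  have hn1 : I + J + 1 = n := by omega
  have hn1' : J + I + 1 = n := by omega
  have hn2 : K + L + 1 = n := by omega
  have hn2' : L + K + 1 = n := by omega
  have e1 : γ * (X * Y) ^ n * γ⁻¹ = (Y * X) ^ n := by
    have h := congrArg₂ (· * ·) h1 h2
    try simp only at h
    calc γ * (X * Y) ^ n * γ⁻¹
        = γ * ((X * Y) ^ I * X * ((Y * X) ^ J * Y)) * γ⁻¹ := by rw [aux, hn1]
      _ = (γ * (X * Y) ^ I * X * γ⁻¹) * (γ * (Y * X) ^ J * Y * γ⁻¹) := by group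
      _ = (Y * X) ^ L * Y * ((X * Y) ^ K * X) := h
      _ = (Y * X) ^ n := by rw [aux, hn2']
  have e2 : γ * (Y * X) ^ n * γ⁻¹ = (X * Y) ^ n := by
    have h := congrArg₂ (· * ·) h2 h1
    try simp only at h
    calc γ * (Y * X) ^ n * γ⁻¹
        = γ * ((Y * X) ^ J * Y * ((X * Y) ^ I * X)) * γ⁻¹ := by rw [aux, hn1']
      _ = (γ * (Y * X) ^ J * Y * γ⁻¹) * (γ * (X * Y) ^ I * X * γ⁻¹) := by group
      _ = (X * Y) ^ K * X * ((Y * X) ^ L * Y) := h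
      _ = (X * Y) ^ n := by rw [aux, hn2]
  have g1 : γ * (X * Y) ^ n = (Y * X) ^ n * γ := by rw [← e1]; group
  have g2 : γ * (Y * X) ^ n = (X * Y) ^ n * γ := by rw [← e2]; group
  constructor
  · show (X * γ) * (X * Y) ^ n = (X * Y) ^ n * (X * γ)
    rw [mul_assoc, g1, ← mul_assoc, aux0, mul_assoc]
  · show (Y * γ) * (Y * X) ^ n = (Y * X) ^ n * (Y * γ)
    rw [mul_assoc, g2, ← mul_assoc, aux0, mul_assoc]
end

section
/- Let F be a free group (FreeGroup α for some type α), let w ∈ F be nontrivial and not a proper power, let n ≥ 1 be a natural number, and let c ∈ F be an element commuting with w^n. Then c lies in the cyclic subgroup generated by w, i.e., c = w^u for some integer u. -/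
open FreeGroup

namespace FG1

def expSum {ι : Type*} [DecidableEq ι] (a : ι) : FreeGroup ι →* Multiplicative ℤ :=
  FreeGroup.lift (fun c => Multiplicative.ofAdd (if c = a then (1:ℤ) else 0))

lemma expSum_of {ι : Type*} [DecidableEq ι] (a : ι) :
    expSum a (of a) = Multiplicative.ofAdd 1 := by simp [expSum]

lemma of_zpow_inj {ι : Type*} (a : ι) {k : ℤ} (h : (of a : FreeGroup ι) ^ k = 1) : k = 0 := by
  haveI := Classical.decEq ι
  have := congrArg (expSum a) h
  rw [map_zpow, expSum_of] at this
  have h2 := congrArg Multiplicative.toAdd this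
  simpa using h2

lemma eq_one_of_isEmpty {ι : Type*} [IsEmpty ι] (x : FreeGroup ι) : x = 1 := by
  rcases x with ⟨L⟩
  cases L with
  | nil => rfl
  | cons h t => exact (IsEmpty.false h.1).elim

lemma exists_zpow_of_subsingleton {ι : Type*} [Subsingleton ι] (a : ι) (x : FreeGroup ι) :
    ∃ k : ℤ, x = (of a : FreeGroup ι) ^ k := by
  haveI : Unique ι := uniqueOfSubsingleton a
  let e : ι ≃ Unit := Equiv.equivPUnit ι
  let φ : FreeGroup ι ≃* FreeGroup Unit := freeGroupCongr e
  refine ⟨freeGroupUnitEquivInt (φ x), ?_⟩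
  have h1 : φ x = FreeGroup.of () ^ (freeGroupUnitEquivInt (φ x)) :=
    (freeGroupUnitEquivInt.left_inv (φ x)).symm
  have h2 := congrArg φ.symm h1
  rw [MulEquiv.symm_apply_apply, map_zpow] at h2
  have h3 : φ.symm (FreeGroup.of ()) = of a := by
    show (freeGroupCongr e).symm _ = _
    rw [freeGroupCongr_symm]
    simp only [freeGroupCongr_apply, map.of]
    exact congrArg of (Subsingleton.elim _ _)
  rwa [h3] at h2

lemma subsingleton_of_comm {ι : Type*} (hcomm : ∀ x y : FreeGroup ι, x * y = y * x) :
    Subsingleton ι := by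
  constructor
  intro a b
  by_contra hab
  haveI := Classical.decEq ι
  let f : ι → FreeGroup Bool := fun c => if c = a then of true else if c = b then of false else 1
  let ψ : FreeGroup ι →* FreeGroup Bool := FreeGroup.lift f
  have ha : ψ (of a) = of true := by simp [ψ, f]
  have hb : ψ (of b) = of false := by
    simp only [ψ, f, FreeGroup.lift_apply_of]
    rw [if_neg (Ne.symm hab)]; simp
  have h2 := congrArg ψ (hcomm (of a) (of b))
  rw [_root_.map_mul, _root_.map_mul, ha, hb] at h2
  revert h2
  decide

lemma key {α : Type u} (H : Subgroup (FreeGroup α)) (hcomm : ∀ a b : H, a * b = b * a) :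
    (∃ v : FreeGroup α, (∀ x ∈ H, ∃ k : ℤ, x = v ^ k) ∧ (∀ k : ℤ, v ^ k = 1 → k = 0))
      ∨ (∀ x ∈ H, x = 1) := by
  let ι := IsFreeGroup.Generators H
  let e : FreeGroup ι ≃* H := (IsFreeGroup.toFreeGroup (G := H)).symm
  haveI : Subsingleton ι := by
    apply subsingleton_of_comm
    intro p q
    have := hcomm (e p) (e q)
    apply e.injective
    rw [_root_.map_mul, _root_.map_mul, this]
  rcases isEmpty_or_nonempty ι with hE | ⟨⟨a⟩⟩
  · right
    intro x hx
    have h1 : e.symm ⟨x, hx⟩ = 1 := eq_one_of_isEmpty _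
    have h2 := congrArg e h1
    rw [MulEquiv.apply_symm_apply, _root_.map_one] at h2
    exact congrArg Subtype.val h2
  · left
    refine ⟨(e (of a) : FreeGroup α), ?_, ?_⟩
    · intro x hx
      obtain ⟨k, hk⟩ := exists_zpow_of_subsingleton a (e.symm ⟨x, hx⟩)
      refine ⟨k, ?_⟩
      have h2 := congrArg e hk
      rw [MulEquiv.apply_symm_apply, map_zpow] at h2
      have h3 := congrArg (Subtype.val) h2
      simpa using h3
    · intro k hk
      apply of_zpow_inj a (k := k)
      apply e.injective
      rw [map_zpow, _root_.map_one]
      apply Subtype.ext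
      simpa using hk

lemma closure_pair_comm {G : Type*} [Group G] {x y : G} (h : Commute x y) :
    ∀ a b : (Subgroup.closure {x, y} : Subgroup G), a * b = b * a := by
  have hsub : Subgroup.closure {x, y} ≤ Subgroup.centralizer {x, y} := by
    rw [Subgroup.closure_le]
    intro g hg
    simp only [SetLike.mem_coe, Subgroup.mem_centralizer_iff]
    intro m hm
    rcases hg with rfl | rfl <;> rcases hm with rfl | rfl
    · rfl
    · exact h.symm
    · exact h
    · rfl
  rintro ⟨a, ha⟩ ⟨b, hb⟩
  apply Subtype.ext
  show a * b = b * a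
  have ha' := hsub ha
  rw [Subgroup.mem_centralizer_iff] at ha'
  have hxa : x * a = a * x := ha' x (by simp)
  have hya : y * a = a * y := ha' y (by simp)
  have : Subgroup.closure {x, y} ≤ Subgroup.centralizer {a} := by
    rw [Subgroup.closure_le]
    rintro g (rfl | rfl) <;> simp only [SetLike.mem_coe, Subgroup.mem_centralizer_iff] <;>
      intro m hm <;> rcases hm with rfl
    · exact hxa.symm
    · exact hya.symm
  have hb' := this hb
  rw [Subgroup.mem_centralizer_iff] at hb'
  exact hb' a rfl

lemma commute_cyclic {α : Type u} {x y : FreeGroup α} (h : Commute x y) (hx : x ≠ 1) :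
    ∃ v : FreeGroup α, (∃ i : ℤ, x = v ^ i) ∧ (∃ j : ℤ, y = v ^ j) ∧
      (∀ k : ℤ, v ^ k = 1 → k = 0) := by
  rcases key (Subgroup.closure {x, y}) (closure_pair_comm h) with ⟨v, hv, hinj⟩ | htriv
  · have hxm : x ∈ Subgroup.closure ({x, y} : Set (FreeGroup α)) :=
      Subgroup.subset_closure (by simp)
    have hym : y ∈ Subgroup.closure ({x, y} : Set (FreeGroup α)) :=
      Subgroup.subset_closure (by simp)
    exact ⟨v, hv x hxm, hv y hym, hinj⟩
  · exact absurd (htriv x (Subgroup.subset_closure (by simp))) hx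

lemma central_eq_one {ι : Type u} (z : FreeGroup ι) (hz : ∀ x, Commute z x)
    (hns : ¬ Subsingleton ι) : z = 1 := by
  classical
  by_contra hz1
  rw [not_subsingleton_iff_nontrivial] at hns
  obtain ⟨a, b, hab⟩ := hns.exists_pair_ne
  have main : ∀ c : ι, ∃ s : ℤ, z = (of c : FreeGroup ι) ^ s := by
    intro c
    obtain ⟨v, ⟨i, hi⟩, ⟨j, hj⟩, hinj⟩ := commute_cyclic (hz (of c)) hz1
    have h1 : Multiplicative.toAdd (expSum c (of c)) = 1 := by
      simp [expSum]
    have h2 : Multiplicative.toAdd (expSum c (v ^ j))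
        = j * Multiplicative.toAdd (expSum c v) := by
      rw [map_zpow]; simp
    rw [hj] at h1; rw [h2] at h1
    have hdvd : j ∣ 1 := ⟨_, h1.symm⟩
    rcases Int.isUnit_iff.mp (isUnit_of_dvd_one hdvd) with rfl | rfl
    · refine ⟨i, ?_⟩
      have hv : v = of c := by rw [hj, zpow_one]
      rw [hi, hv]
    · refine ⟨-i, ?_⟩
      have hv : v = (of c : FreeGroup ι)⁻¹ := by rw [hj, zpow_neg_one, inv_inv]
      rw [hi, hv, inv_zpow, ← zpow_neg]
  obtain ⟨s, hs⟩ := main a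
  obtain ⟨t, ht⟩ := main b
  have e1 : Multiplicative.toAdd (expSum b z) = 0 := by
    rw [hs, map_zpow]
    have : expSum b (of a) = Multiplicative.ofAdd (0:ℤ) := by
      simp [expSum, hab]
    rw [this]; simp
  have e2 : Multiplicative.toAdd (expSum b z) = t := by
    rw [ht, map_zpow]
    have : expSum b (of b) = Multiplicative.ofAdd (1:ℤ) := by
      simp [expSum]
    rw [this]; simp
  rw [e1] at e2
  rw [← e2] at ht
  simp at ht
  exact hz1 ht

-- torsion-freeness
lemma pow_ne_one {α : Type u} {w : FreeGroup α} (hw : w ≠ 1) {n : ℕ} (hn : 1 ≤ n) :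
    w ^ n ≠ 1 := by
  intro hwn
  obtain ⟨v, ⟨k, hk⟩, _, hinj⟩ := commute_cyclic (Commute.refl w) hw
  have hk0 : k ≠ 0 := by
    rintro rfl
    rw [zpow_zero] at hk
    exact hw hk
  have : v ^ (k * n) = 1 := by
    rw [zpow_mul, ← hk]
    rw [zpow_natCast]
    exact hwn
  have := hinj _ this
  have : k = 0 ∨ (n : ℤ) = 0 := mul_eq_zero.mp this
  rcases this with h | h
  · exact hk0 h
  · omega

end FG1

theorem stmt_1 {α : Type*} (w : FreeGroup α) (hw : w ≠ 1)
    (hnp : ¬ ∃ (z : FreeGroup α) (k : ℤ), 2 ≤ |k| ∧ w = z ^ k)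
    (n : ℕ) (hn : 1 ≤ n) (c : FreeGroup α) (hc : Commute c (w ^ n)) :
    ∃ u : ℤ, c = w ^ u := by
  have hwn : w ^ n ≠ 1 := FG1.pow_ne_one hw hn
  set g := w ^ n with hg
  -- the centralizer of g
  set C := Subgroup.centralizer ({g} : Set (FreeGroup α)) with hC
  have hgC : g ∈ C := Subgroup.mem_centralizer_iff.mpr (by rintro m rfl; rfl)
  have hcC : c ∈ C := Subgroup.mem_centralizer_iff.mpr (by rintro m rfl; exact hc.eq.symm)
  have hwC : w ∈ C := Subgroup.mem_centralizer_iff.mpr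
    (by rintro m rfl; exact ((Commute.refl w).pow_left n).eq)
  let ι := IsFreeGroup.Generators C
  let e : FreeGroup ι ≃* C := (IsFreeGroup.toFreeGroup (G := C)).symm
  set z0 : FreeGroup ι := e.symm ⟨g, hgC⟩ with hz0
  have hz0ne : z0 ≠ 1 := by
    intro h
    have := congrArg e h
    rw [MulEquiv.apply_symm_apply, _root_.map_one] at this
    exact hwn (congrArg Subtype.val this)
  have hz0c : ∀ p : FreeGroup ι, Commute z0 p := by
    intro p
    have hmem : ((e p : C) : FreeGroup α) ∈ C := (e p).2
    rw [Subgroup.mem_centralizer_iff] at hmem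
    have h1 : g * (e p : FreeGroup α) = (e p : FreeGroup α) * g := hmem g rfl
    have h2 : (⟨g, hgC⟩ : C) * (e p) = (e p) * ⟨g, hgC⟩ := Subtype.ext h1
    have h3 := congrArg e.symm h2
    rw [_root_.map_mul, _root_.map_mul, MulEquiv.symm_apply_apply] at h3
    exact h3
  haveI hsub : Subsingleton ι := by
    by_contra hns
    exact hz0ne (FG1.central_eq_one z0 hz0c hns)
  have hne : Nonempty ι := by
    by_contra hE
    rw [not_nonempty_iff] at hE
    exact hz0ne (FG1.eq_one_of_isEmpty z0)
  obtain ⟨a⟩ := hne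
  set v : FreeGroup α := ((e (FreeGroup.of a) : C) : FreeGroup α) with hv
  have pull : ∀ x : FreeGroup α, (hx : x ∈ C) → ∃ k : ℤ, x = v ^ k := by
    intro x hx
    obtain ⟨k, hk⟩ := FG1.exists_zpow_of_subsingleton a (e.symm ⟨x, hx⟩)
    refine ⟨k, ?_⟩
    have h2 := congrArg e hk
    rw [MulEquiv.apply_symm_apply, map_zpow] at h2
    have h3 := congrArg Subtype.val h2
    simpa using h3
  obtain ⟨i, hi⟩ := pull c hcC
  obtain ⟨j, hj⟩ := pull w hwC
  have hj0 : j ≠ 0 := by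
    rintro rfl
    rw [zpow_zero] at hj
    exact hw hj
  have hjle : ¬ 2 ≤ |j| := fun h2 => hnp ⟨v, j, h2, hj⟩
  have hj1 : |j| = 1 := by
    have := Int.one_le_abs hj0
    omega
  have hj11 : j = 1 ∨ j = -1 := by
    rcases abs_cases j with ⟨h1, _⟩ | ⟨h1, _⟩
    · left; omega
    · right; omega
  rcases hj11 with rfl | rfl
  · refine ⟨i, ?_⟩
    have : v = w := by rw [hj, zpow_one]
    rw [hi, this]
  · refine ⟨-i, ?_⟩
    have : v = w⁻¹ := by rw [hj, zpow_neg_one, inv_inv]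
    rw [hi, this, inv_zpow, ← zpow_neg]
end

section
/- Let F be a free group and let X, Y ∈ F. If there exist integers u and v such that X⁻¹·(XY)^u = Y⁻¹·(YX)^v, then there exist an element z ∈ F and integers m and k such that X = z^m and Y = z^k. -/
open Subgroup

-- every element of a free group on a subsingleton type is a power of `of s`
private lemma pow_of_subsingleton {S : Type*} [Subsingleton S] (s : S) (x : FreeGroup S) :
    ∃ n : ℤ, x = FreeGroup.of s ^ n := by
  induction x using FreeGroup.induction_on with
  | C1 => exact ⟨0, by simp⟩
  | of a => exact ⟨1, by rw [Subsingleton.elim a s]; simp⟩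
  | inv_of a ih =>
      obtain ⟨n, hn⟩ := ih
      exact ⟨-n, by rw [hn, zpow_neg]⟩
  | mul a b iha ihb =>
      obtain ⟨n, hn⟩ := iha
      obtain ⟨m, hm⟩ := ihb
      exact ⟨n + m, by rw [hn, hm, zpow_add]⟩

private lemma eq_one_of_isEmpty {S : Type*} [IsEmpty S] (x : FreeGroup S) : x = 1 := by
  induction x using FreeGroup.induction_on with
  | C1 => rfl
  | of a => exact isEmptyElim a
  | inv_of a ih => rw [ih]; simp
  | mul a b iha ihb => rw [iha, ihb, one_mul]

-- any hom from the closure of {x, y} killing x and y is trivial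
private lemma hom_trivial {α : Type*} {x y : FreeGroup α}
    {G : Type} [Group G]
    (ψ : ↥(Subgroup.closure ({x, y} : Set (FreeGroup α))) →* G)
    (hx' : x ∈ Subgroup.closure ({x, y} : Set (FreeGroup α)))
    (hy' : y ∈ Subgroup.closure ({x, y} : Set (FreeGroup α)))
    (h1 : ψ ⟨x, hx'⟩ = 1) (h2 : ψ ⟨y, hy'⟩ = 1)
    (h : ↥(Subgroup.closure ({x, y} : Set (FreeGroup α)))) : ψ h = 1 := by
  have htop : Subgroup.closure
      (((↑) : Subgroup.closure ({x, y} : Set (FreeGroup α)) → FreeGroup α) ⁻¹' {x, y}) = ⊤ :=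
    Subgroup.closure_closure_coe_preimage
  have hle : Subgroup.closure
      (((↑) : Subgroup.closure ({x, y} : Set (FreeGroup α)) → FreeGroup α) ⁻¹' {x, y}) ≤ ψ.ker := by
    rw [Subgroup.closure_le]
    rintro t ht
    rcases ht with ht | ht
    · have : t = ⟨x, hx'⟩ := Subtype.ext ht
      simpa [MonoidHom.mem_ker, this] using h1
    · have : t = ⟨y, hy'⟩ := Subtype.ext ht
      simpa [MonoidHom.mem_ker, this] using h2
  have : h ∈ ψ.ker := by rw [← MonoidHom.mem_ker] at *; exact hle (htop ▸ Subgroup.mem_top h)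
  exact this

private lemma key {α : Type*} (x y : FreeGroup α) (n b : ℤ) (hn : n ≠ 0) (hb : b ≠ 0)
    (hrel : x ^ n = y ^ b) : ∃ (z : FreeGroup α) (m k : ℤ), x = z ^ m ∧ y = z ^ k := by
  classical
  set H := Subgroup.closure ({x, y} : Set (FreeGroup α)) with hHdef
  have hx : x ∈ H := Subgroup.subset_closure (by simp)
  have hy : y ∈ H := Subgroup.subset_closure (by simp)
  set x' : H := ⟨x, hx⟩ with hx'def
  set y' : H := ⟨y, hy⟩ with hy'def
  have hrel' : x' ^ n = y' ^ b := by
    apply Subtype.ext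
    rw [SubgroupClass.coe_zpow, SubgroupClass.coe_zpow]
    exact hrel
  have hsub : Subsingleton (IsFreeGroup.Generators H) := by
    by_contra hns
    rw [not_subsingleton_iff_nontrivial] at hns
    obtain ⟨a, c, hac⟩ := hns.exists_pair_ne
    set φ : H →* Multiplicative (ℤ × ℤ) :=
      IsFreeGroup.lift (fun t => if t = a then Multiplicative.ofAdd ((1, 0) : ℤ × ℤ)
        else if t = c then Multiplicative.ofAdd ((0, 1) : ℤ × ℤ) else 1) with hφdef
    set P : ℤ × ℤ := Multiplicative.toAdd (φ x') with hPdef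
    set Q : ℤ × ℤ := Multiplicative.toAdd (φ y') with hQdef
    have hphia : φ (IsFreeGroup.of a) = Multiplicative.ofAdd ((1, 0) : ℤ × ℤ) := by
      rw [hφdef, IsFreeGroup.lift_of]; simp
    have hphic : φ (IsFreeGroup.of c) = Multiplicative.ofAdd ((0, 1) : ℤ × ℤ) := by
      rw [hφdef, IsFreeGroup.lift_of]; simp [hac.symm]
    have hPQ : n • P = b • Q := by
      have h1 : φ x' ^ n = φ y' ^ b := by rw [← map_zpow, ← map_zpow, hrel']
      have := congrArg Multiplicative.toAdd h1
      simpa [toAdd_zpow] using this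
    have hPQ1 : n * P.1 = b * Q.1 := congrArg Prod.fst hPQ
    have hPQ2 : n * P.2 = b * Q.2 := congrArg Prod.snd hPQ
    -- the functional r ↦ P.1 * r.2 - P.2 * r.1 kills both P and Q
    set f : ℤ × ℤ →+ ℤ :=
      { toFun := fun r => P.1 * r.2 - P.2 * r.1
        map_zero' := by simp
        map_add' := by intro r s; simp [Prod.fst_add, Prod.snd_add]; ring }
    have hfP : f P = 0 := by simp [f]; ring
    have hfQ : f Q = 0 := by
      have : b * (P.1 * Q.2 - P.2 * Q.1) = 0 := by
        have : P.1 * (b * Q.2) - P.2 * (b * Q.1) = P.1 * (n * P.2) - P.2 * (n * P.1) := by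
          rw [← hPQ1, ← hPQ2]
        nlinarith [this]
      have := mul_eq_zero.mp this
      rcases this with h | h
      · exact absurd h hb
      · simpa [f] using h
    set ψ : H →* Multiplicative ℤ := (AddMonoidHom.toMultiplicative f).comp φ with hψdef
    have hψx : ψ x' = 1 := by
      have : ψ x' = Multiplicative.ofAdd (f P) := rfl
      rw [this, hfP]; rfl
    have hψy : ψ y' = 1 := by
      have : ψ y' = Multiplicative.ofAdd (f Q) := rfl
      rw [this, hfQ]; rfl
    have hψall := hom_trivial ψ hx hy hψx hψy
    have hP2 : P.2 = 0 := by
      have := hψall (IsFreeGroup.of a)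
      have : Multiplicative.ofAdd (f ((1, 0) : ℤ × ℤ)) = 1 := by
        rw [← this]; show _ = Multiplicative.ofAdd (f (Multiplicative.toAdd (φ (IsFreeGroup.of a))))
        rw [hphia]; rfl
      have hz : f ((1, 0) : ℤ × ℤ) = 0 := by
        have := congrArg Multiplicative.toAdd this; simpa using this
      simpa [f] using hz
    have hP1 : P.1 = 0 := by
      have := hψall (IsFreeGroup.of c)
      have : Multiplicative.ofAdd (f ((0, 1) : ℤ × ℤ)) = 1 := by
        rw [← this]; show _ = Multiplicative.ofAdd (f (Multiplicative.toAdd (φ (IsFreeGroup.of c))))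
        rw [hphic]; rfl
      have hz : f ((0, 1) : ℤ × ℤ) = 0 := by
        have := congrArg Multiplicative.toAdd this; simpa using this
      simpa [f] using hz
    have hP0 : P = 0 := Prod.ext hP1 hP2
    have hQ0 : Q = 0 := by
      have h1 : b * Q.1 = 0 := by rw [← hPQ1, hP1]; ring
      have h2 : b * Q.2 = 0 := by rw [← hPQ2, hP2]; ring
      have q1 : Q.1 = 0 := by rcases mul_eq_zero.mp h1 with h | h; exacts [absurd h hb, h]
      have q2 : Q.2 = 0 := by rcases mul_eq_zero.mp h2 with h | h; exacts [absurd h hb, h]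
      exact Prod.ext q1 q2
    have hφx : φ x' = 1 := by
      have : φ x' = Multiplicative.ofAdd P := rfl
      rw [this, hP0]; rfl
    have hφy : φ y' = 1 := by
      have : φ y' = Multiplicative.ofAdd Q := rfl
      rw [this, hQ0]; rfl
    have hφall := hom_trivial φ hx hy hφx hφy
    have := hφall (IsFreeGroup.of c)
    rw [hphic] at this
    have := congrArg Multiplicative.toAdd this
    simp at this
  -- now the subgroup is cyclic
  haveI := hsub
  set e : H ≃* FreeGroup (IsFreeGroup.Generators H) := IsFreeGroup.toFreeGroup ↥H with hedef
  by_cases hS : Nonempty (IsFreeGroup.Generators H)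
  · obtain ⟨s⟩ := hS
    set z : FreeGroup α := (↑(e.symm (FreeGroup.of s)) : FreeGroup α) with hzdef
    obtain ⟨m, hm⟩ := pow_of_subsingleton s (e x')
    obtain ⟨k, hk⟩ := pow_of_subsingleton s (e y')
    refine ⟨z, m, k, ?_, ?_⟩
    · have : x' = e.symm (FreeGroup.of s) ^ m := by
        apply e.injective
        rw [map_zpow, MulEquiv.apply_symm_apply, ← hm]
      calc x = (↑x' : FreeGroup α) := rfl
        _ = ↑(e.symm (FreeGroup.of s) ^ m) := by rw [this]
        _ = z ^ m := by rw [SubgroupClass.coe_zpow]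
    · have : y' = e.symm (FreeGroup.of s) ^ k := by
        apply e.injective
        rw [map_zpow, MulEquiv.apply_symm_apply, ← hk]
      calc y = (↑y' : FreeGroup α) := rfl
        _ = ↑(e.symm (FreeGroup.of s) ^ k) := by rw [this]
        _ = z ^ k := by rw [SubgroupClass.coe_zpow]
  · haveI : IsEmpty (IsFreeGroup.Generators H) := not_nonempty_iff.mp hS
    have hx1 : x = 1 := by
      have : e x' = 1 := eq_one_of_isEmpty _
      have : x' = 1 := by apply e.injective; rw [this, map_one]
      exact congrArg Subtype.val this
    have hy1 : y = 1 := by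
      have : e y' = 1 := eq_one_of_isEmpty _
      have : y' = 1 := by apply e.injective; rw [this, map_one]
      exact congrArg Subtype.val this
    exact ⟨1, 0, 0, by simp [hx1, hy1]⟩

private lemma sq_eq_one_imp {α : Type*} (w : FreeGroup α) (hw : w ^ 2 = 1) : w = 1 := by
  classical
  set H := Subgroup.zpowers w with hHdef
  have hmem : w ∈ H := Subgroup.mem_zpowers w
  set w' : H := ⟨w, hmem⟩ with hw'def
  have hcomm : ∀ g h : H, g * h = h * g := by
    rintro ⟨g, hg⟩ ⟨h, hh⟩
    obtain ⟨i, hi⟩ := Subgroup.mem_zpowers_iff.mp hg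
    obtain ⟨j, hj⟩ := Subgroup.mem_zpowers_iff.mp hh
    apply Subtype.ext
    show g * h = h * g
    rw [← hi, ← hj, ← zpow_add, ← zpow_add, add_comm]
  have hsub : Subsingleton (IsFreeGroup.Generators H) := by
    by_contra hns
    rw [not_subsingleton_iff_nontrivial] at hns
    obtain ⟨a, c, hac⟩ := hns.exists_pair_ne
    set e : H ≃* FreeGroup (IsFreeGroup.Generators H) := IsFreeGroup.toFreeGroup ↥H with hedef
    have hco : FreeGroup.of a * FreeGroup.of c = FreeGroup.of c * FreeGroup.of a := by
      have := hcomm (e.symm (FreeGroup.of a)) (e.symm (FreeGroup.of c))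
      have := congrArg e this
      simpa [map_mul] using this
    set ρ : FreeGroup (IsFreeGroup.Generators H) →* Equiv.Perm (Fin 3) :=
      FreeGroup.lift (fun t => if t = a then Equiv.swap 0 1
        else if t = c then Equiv.swap 1 2 else 1) with hρdef
    have h1 : ρ (FreeGroup.of a) = Equiv.swap 0 1 := by rw [hρdef, FreeGroup.lift_apply_of]; simp
    have h2 : ρ (FreeGroup.of c) = Equiv.swap 1 2 := by
      rw [hρdef, FreeGroup.lift_apply_of]; simp [hac.symm]
    have := congrArg ρ hco
    rw [map_mul, map_mul, h1, h2] at this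
    have h3 := congrArg (fun π : Equiv.Perm (Fin 3) => π 2) this
    simp [Equiv.Perm.mul_apply, Equiv.swap_apply_def] at h3
  haveI := hsub
  set e : H ≃* FreeGroup (IsFreeGroup.Generators H) := IsFreeGroup.toFreeGroup ↥H with hedef
  have hw2 : w' ^ 2 = 1 := by
    apply Subtype.ext
    show w ^ 2 = 1
    exact hw
  by_cases hS : Nonempty (IsFreeGroup.Generators H)
  · obtain ⟨s⟩ := hS
    obtain ⟨m, hm⟩ := pow_of_subsingleton s (e w')
    have h2m : FreeGroup.of s ^ (2 * m) = 1 := by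
      have : e (w' ^ 2) = 1 := by rw [hw2, map_one]
      rw [map_pow, hm, ← zpow_natCast, ← zpow_mul] at this
      simpa [mul_comm] using this
    set lam : FreeGroup (IsFreeGroup.Generators H) →* Multiplicative ℤ :=
      FreeGroup.lift (fun _ => Multiplicative.ofAdd (1 : ℤ)) with hlamdef
    have := congrArg lam h2m
    rw [map_zpow, map_one, hlamdef, FreeGroup.lift_apply_of] at this
    have := congrArg Multiplicative.toAdd this
    rw [toAdd_zpow] at this
    simp at this
    have hm0 : m = 0 := this
    have : e w' = 1 := by rw [hm, hm0, zpow_zero]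
    have : w' = 1 := by apply e.injective; rw [this, map_one]
    exact congrArg Subtype.val this
  · haveI : IsEmpty (IsFreeGroup.Generators H) := not_nonempty_iff.mp hS
    have : e w' = 1 := eq_one_of_isEmpty _
    have : w' = 1 := by apply e.injective; rw [this, map_one]
    exact congrArg Subtype.val this

theorem stmt_2 {α : Type*} (X Y : FreeGroup α)
    (h : ∃ u v : ℤ, X⁻¹ * (X * Y) ^ u = Y⁻¹ * (Y * X) ^ v) :
    ∃ (z : FreeGroup α) (m k : ℤ), X = z ^ m ∧ Y = z ^ k := by
  obtain ⟨u, v, heq⟩ := h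
  set c := X * Y with hc
  have hY : Y = X⁻¹ * c := by rw [hc]; group
  have hconj : (X⁻¹ * c * X) ^ v = X⁻¹ * c ^ v * X := by
    have := conj_zpow (i := v) (a := X⁻¹) (b := c)
    simpa using this
  have hw1 : X⁻¹ * c ^ u = c ^ (v - 1) * X := by
    rw [hY] at heq
    rw [heq, hconj]; group
  have hw2 : (X⁻¹ * c ^ u) ^ (2 : ℤ) = c ^ (u + v - 1) := by
    calc (X⁻¹ * c ^ u) ^ (2 : ℤ) = (X⁻¹ * c ^ u) * (X⁻¹ * c ^ u) := zpow_two _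
    _ = (c ^ (v - 1) * X) * (X⁻¹ * c ^ u) := by nth_rewrite 1 [hw1]; rfl
    _ = c ^ (u + v - 1) := by group
  by_cases hN : u + v - 1 = 0
  · have h2 : (X⁻¹ * c ^ u) ^ (2 : ℕ) = 1 := by
      have := hw2
      rw [hN, zpow_zero] at this
      rwa [show ((2 : ℤ)) = ((2 : ℕ) : ℤ) by norm_num, zpow_natCast] at this
    have hwone : X⁻¹ * c ^ u = 1 := sq_eq_one_imp _ h2
    have hX : X = c ^ u := by
      calc X = X * (X⁻¹ * c ^ u) := by rw [hwone, mul_one]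
      _ = c ^ u := by group
    have hY : Y = c ^ (1 - u) := by
      rw [hY, hX]; group
    exact ⟨c, u, 1 - u, hX, hY⟩
  · obtain ⟨z, m, k, hwz, hcz⟩ := key (X⁻¹ * c ^ u) c 2 (u + v - 1) two_ne_zero hN hw2
    have hX : X = c ^ u * (X⁻¹ * c ^ u)⁻¹ := by group
    refine ⟨z, k * u - m, m - k * u + k, ?_, ?_⟩
    · rw [hX, hwz, hcz]; group
    · rw [hY, hX, hwz, hcz]; group
end

section
/- Let F be a free group, let X, Y, γ ∈ F, let n ≥ 1 be a natural number, and let I, J, K, L be natural numbers with I + J = n - 1 and K + L = n - 1. Assume that the product XY is nontrivial and is not a proper power. If γ·(XY)^I·X·γ⁻¹ = (YX)^L·Y and γ·(YX)^J·Y·γ⁻¹ = (XY)^K·X, then there exist an element z ∈ F and integers m and k such that X = z^m and Y = z^k. -/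
open FreeGroup Subgroup

private lemma of_not_comm {S : Type*} {x y : S} (h : x ≠ y) :
    FreeGroup.of x * FreeGroup.of y ≠ FreeGroup.of y * FreeGroup.of x := by
  classical
  intro hc
  set f : S → Equiv.Perm (Fin 3) := fun s => if s = x then Equiv.swap 0 1 else
      if s = y then Equiv.swap 1 2 else 1 with hf
  have hC : FreeGroup.lift f (FreeGroup.of x * FreeGroup.of y)
      = FreeGroup.lift f (FreeGroup.of y * FreeGroup.of x) := by rw [hc]
  rw [_root_.map_mul, _root_.map_mul, FreeGroup.lift_apply_of, FreeGroup.lift_apply_of, hf] at hC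
  simp only [if_pos rfl, if_neg h, if_neg (Ne.symm h)] at hC
  exact absurd hC (by decide)

/-- exponent-sum homomorphism -/
private def cnt {S : Type*} [DecidableEq S] (x : S) : FreeGroup S →* Multiplicative ℤ :=
  FreeGroup.lift (fun s => Multiplicative.ofAdd (if s = x then (1 : ℤ) else 0))

private lemma cnt_zpow_of_self {S : Type*} [DecidableEq S] (x : S) (k : ℤ) :
    cnt x ((FreeGroup.of x) ^ k) = Multiplicative.ofAdd k := by
  rw [map_zpow]
  have : cnt x (FreeGroup.of x) = Multiplicative.ofAdd (1 : ℤ) := by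
    rw [cnt, FreeGroup.lift_apply_of, if_pos rfl]
  rw [this, ← ofAdd_zsmul]
  norm_num

private lemma cnt_zpow_of_ne {S : Type*} [DecidableEq S] {x y : S} (h : y ≠ x) (k : ℤ) :
    cnt x ((FreeGroup.of y) ^ k) = 1 := by
  rw [map_zpow]
  have : cnt x (FreeGroup.of y) = 1 := by
    rw [cnt, FreeGroup.lift_apply_of, if_neg h]; rfl
  rw [this, one_zpow]

/-- A free group over a subsingleton type is cyclic and torsion-free. -/
private lemma freeGroup_subsingleton_cyclic (S : Type*) [Subsingleton S] :
    ∃ z : FreeGroup S, (∀ g : FreeGroup S, ∃ k : ℤ, g = z ^ k) ∧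
      (∀ k : ℤ, z ^ k = 1 → z = 1 ∨ k = 0) := by
  classical
  rcases isEmpty_or_nonempty S with hS | ⟨⟨s⟩⟩
  · refine ⟨1, fun g => ⟨0, ?_⟩, fun k _ => Or.inl rfl⟩
    induction g using FreeGroup.induction_on with
    | C1 => simp
    | of x => exact isEmptyElim x
    | inv_of x _ => exact isEmptyElim x
    | mul a b ha hb => rw [ha, hb]; simp
  · refine ⟨FreeGroup.of s, fun g => ?_, fun k hk => ?_⟩
    · induction g using FreeGroup.induction_on with
      | C1 => exact ⟨0, by simp⟩
      | of x => exact ⟨1, by rw [Subsingleton.elim x s, zpow_one]⟩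
      | inv_of x _ => exact ⟨-1, by rw [Subsingleton.elim x s, zpow_neg, zpow_one]⟩
      | mul a b ha hb =>
          obtain ⟨i, hi⟩ := ha; obtain ⟨j, hj⟩ := hb
          exact ⟨i + j, by rw [hi, hj, zpow_add]⟩
    · right
      have := congrArg (cnt s) hk
      rw [cnt_zpow_of_self, _root_.map_one] at this
      exact ofAdd_eq_one.mp this

/-- A free group whose generator type is a subsingleton is cyclic and torsion-free. -/
private lemma cyclic_of_subsingleton_generators (G : Type*) [Group G] [IsFreeGroup G]
    (hS : Subsingleton (IsFreeGroup.Generators G)) :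
    ∃ z : G, (∀ g : G, ∃ k : ℤ, g = z ^ k) ∧ (∀ k : ℤ, z ^ k = 1 → z = 1 ∨ k = 0) := by
  haveI := hS
  obtain ⟨z, hz, htor⟩ := freeGroup_subsingleton_cyclic (IsFreeGroup.Generators G)
  set e := IsFreeGroup.mulEquiv G with he
  refine ⟨e z, fun g => ?_, fun k hk => ?_⟩
  · obtain ⟨k, hk⟩ := hz (e.symm g)
    exact ⟨k, by rw [← e.apply_symm_apply g, hk, map_zpow]⟩
  · have h1 : e (z ^ k) = e 1 := by rw [map_zpow, hk, _root_.map_one]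
    rcases htor k (e.injective h1) with h | h
    · exact Or.inl (by rw [h, _root_.map_one])
    · exact Or.inr h

private lemma subsingleton_generators_of_comm (G : Type*) [Group G] [IsFreeGroup G]
    (hab : ∀ a b : G, a * b = b * a) : Subsingleton (IsFreeGroup.Generators G) := by
  constructor
  intro x y
  by_contra h
  exact of_not_comm h ((IsFreeGroup.mulEquiv G).injective
    (by rw [_root_.map_mul, _root_.map_mul]; exact hab _ _))

/-- Commuting elements of a free group are powers of a common element. -/
private lemma commute_common {G : Type*} [Group G] [IsFreeGroup G] {a b : G}
    (h : a * b = b * a) : ∃ z : G, ∃ m k : ℤ, a = z ^ m ∧ b = z ^ k := by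
  set H := Subgroup.closure ({a, b} : Set G) with hH
  have ha : a ∈ H := Subgroup.subset_closure (by simp)
  have hb : b ∈ H := Subgroup.subset_closure (by simp)
  have hcen : H ≤ Subgroup.centralizer {a, b} := (Subgroup.closure_le _).2 (by
    rintro c (rfl | rfl) <;> rw [SetLike.mem_coe, Subgroup.mem_centralizer_iff] <;>
      rintro d (rfl | rfl) <;> first | rfl | exact h | exact h.symm)
  have hcomm : ∀ g ∈ H, ∀ g' ∈ H, g * g' = g' * g := by
    intro g hg g' hg'
    have hg2 := hcen hg
    have hle : H ≤ Subgroup.centralizer {g} := (Subgroup.closure_le _).2 (by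
      intro c hc
      rw [SetLike.mem_coe, Subgroup.mem_centralizer_iff]
      rintro d rfl
      exact (Subgroup.mem_centralizer_iff.mp hg2 c hc).symm)
    exact Subgroup.mem_centralizer_iff.mp (hle hg') g (Set.mem_singleton g)
  have hcomm' : ∀ p q : H, p * q = q * p := fun p q =>
    Subtype.ext (hcomm p p.2 q q.2)
  obtain ⟨z, hz, -⟩ := cyclic_of_subsingleton_generators H
    (subsingleton_generators_of_comm H hcomm')
  obtain ⟨m, hm⟩ := hz ⟨a, ha⟩
  obtain ⟨k, hk⟩ := hz ⟨b, hb⟩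
  refine ⟨(z : G), m, k, ?_, ?_⟩
  · have := congrArg Subtype.val hm; simpa using this
  · have := congrArg Subtype.val hk; simpa using this

/-- Free groups are torsion-free. -/
private lemma freeGroup_torsionfree {G : Type*} [Group G] [IsFreeGroup G] {g : G} {k : ℤ}
    (hg : g ^ k = 1) (hk : k ≠ 0) : g = 1 := by
  have hcomm : ∀ p q : Subgroup.zpowers g, p * q = q * p := by
    rintro ⟨p, hp⟩ ⟨q, hq⟩
    obtain ⟨i, hi⟩ := Subgroup.mem_zpowers_iff.mp hp
    obtain ⟨j, hj⟩ := Subgroup.mem_zpowers_iff.mp hq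
    apply Subtype.ext
    show p * q = q * p
    rw [← hi, ← hj, ← zpow_add, ← zpow_add, add_comm]
  obtain ⟨z, hz, htor⟩ := cyclic_of_subsingleton_generators (Subgroup.zpowers g)
    (subsingleton_generators_of_comm _ hcomm)
  obtain ⟨m, hm⟩ := hz ⟨g, Subgroup.mem_zpowers g⟩
  have hg' : (⟨g, Subgroup.mem_zpowers g⟩ : Subgroup.zpowers g) ^ k = 1 :=
    Subtype.ext (by simpa using hg)
  rw [hm, ← zpow_mul] at hg'
  rcases htor _ hg' with h1 | h0
  · rw [h1, one_zpow] at hm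
    simpa using congrArg Subtype.val hm
  · rcases mul_eq_zero.mp h0 with hm0 | hk0
    · rw [hm0, zpow_zero] at hm
      simpa using congrArg Subtype.val hm
    · exact absurd hk0 hk

/-- Two elements commuting with a common nontrivial element of a free group are
powers of a common element. -/
private lemma common_of_commute_with {G : Type*} [Group G] [IsFreeGroup G] {c a b : G}
    (hc : c ≠ 1) (hac : a * c = c * a) (hbc : b * c = c * b) :
    ∃ z : G, ∃ m k : ℤ, a = z ^ m ∧ b = z ^ k := by
  classical
  set C := Subgroup.centralizer ({c} : Set G) with hCdef
  have hmem : ∀ {g : G}, g * c = c * g → g ∈ C := by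
    intro g hg
    rw [hCdef, Subgroup.mem_centralizer_iff]
    rintro d rfl
    exact hg.symm
  have hcC : c ∈ C := hmem rfl
  have haC : a ∈ C := hmem hac
  have hbC : b ∈ C := hmem hbc
  set S := IsFreeGroup.Generators C with hSdef
  set e := IsFreeGroup.mulEquiv C with he
  set c' : FreeGroup S := e.symm ⟨c, hcC⟩ with hc'def
  have hc1 : c' ≠ 1 := by
    intro h
    apply hc
    have h2 := congrArg e h
    rw [e.apply_symm_apply, _root_.map_one] at h2
    simpa using congrArg Subtype.val h2
  have hcent : ∀ u : FreeGroup S, u * c' = c' * u := by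
    intro u
    apply e.injective
    rw [_root_.map_mul, _root_.map_mul, e.apply_symm_apply]
    apply Subtype.ext
    show ((e u : C) : G) * c = c * ((e u : C) : G)
    exact (Subgroup.mem_centralizer_iff.mp (e u).2 c (Set.mem_singleton c)).symm
  have hform : ∀ x : S, ∃ A : ℤ, c' = (FreeGroup.of x) ^ A := by
    intro x
    obtain ⟨z1, m1, k1, hx1, hc1'⟩ := commute_common (hcent (FreeGroup.of x))
    -- hx1 : FreeGroup.of x = z1 ^ m1, hc1' : c' = z1 ^ k1
    have ht : m1 * Multiplicative.toAdd (cnt x z1) = 1 := by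
      have := congrArg (cnt x) hx1
      rw [map_zpow] at this
      have h2 := congrArg Multiplicative.toAdd this
      rw [toAdd_zpow] at h2
      have h3 : Multiplicative.toAdd (cnt x (FreeGroup.of x)) = 1 := by
        rw [cnt, FreeGroup.lift_apply_of, if_pos rfl]; rfl
      rw [h3] at h2
      simpa [smul_eq_mul] using h2.symm
    rcases Int.isUnit_iff.mp (IsUnit.of_mul_eq_one _ ht) with h1 | h1
    · rw [h1, zpow_one] at hx1
      exact ⟨k1, by rw [hc1', hx1]⟩
    · rw [h1] at hx1
      have : z1 = (FreeGroup.of x)⁻¹ := by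
        rw [hx1]; group
      exact ⟨-k1, by rw [hc1', this, inv_zpow, ← zpow_neg]⟩
  haveI hss : Subsingleton S := by
    by_contra hns
    rw [not_subsingleton_iff_nontrivial] at hns
    obtain ⟨x, y, hxy⟩ := hns
    obtain ⟨A, hA⟩ := hform x
    obtain ⟨B, hB⟩ := hform y
    have h1 : cnt y c' = 1 := by rw [hA]; exact cnt_zpow_of_ne hxy A
    have h2 : cnt y c' = Multiplicative.ofAdd B := by rw [hB, cnt_zpow_of_self]
    have hB0 : B = 0 := by
      have := h1.symm.trans h2
      simpa using this.symm
    exact hc1 (by rw [hB, hB0, zpow_zero])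
  obtain ⟨z, hz, -⟩ := cyclic_of_subsingleton_generators C hss
  obtain ⟨m, hm⟩ := hz ⟨a, haC⟩
  obtain ⟨k, hk⟩ := hz ⟨b, hbC⟩
  exact ⟨(z : G), m, k, by simpa using congrArg Subtype.val hm,
    by simpa using congrArg Subtype.val hk⟩

/-- If `w` is nontrivial and not a proper power, then any element commuting with a
nontrivial element that `w` also commutes with is a power of `w`. -/
private lemma pow_of_commute_with {α : Type*} {w : FreeGroup α} (hw : w ≠ 1)
    (hnp : ¬ ∃ (z : FreeGroup α) (k : ℤ), 2 ≤ |k| ∧ w = z ^ k)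
    {c u : FreeGroup α} (hc : c ≠ 1) (hu : u * c = c * u) (hwc : w * c = c * w) :
    ∃ T : ℤ, u = w ^ T := by
  obtain ⟨z, m, t, hum, hwt⟩ := common_of_commute_with hc hu hwc
  have ht1 : t = 1 ∨ t = -1 := by
    by_contra hcon
    push_neg at hcon
    obtain ⟨ht1', ht1''⟩ := hcon
    rcases eq_or_ne t 0 with rfl | ht0
    · rw [zpow_zero] at hwt; exact hw hwt
    · refine hnp ⟨z, t, ?_, hwt⟩
      rcases le_or_gt 0 t with h | h
      · rw [abs_of_nonneg h]; omega
      · rw [abs_of_neg h]; omega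
  rcases ht1 with h | h
  · rw [h, zpow_one] at hwt
    exact ⟨m, by rw [hum, hwt]⟩
  · rw [h] at hwt
    have hz : z = w⁻¹ := by rw [hwt]; group
    exact ⟨-m, by rw [hum, hz, inv_zpow, ← zpow_neg]⟩

private lemma shift {α : Type*} (a b : FreeGroup α) (k : ℕ) :
    a * (b * a) ^ k = (a * b) ^ k * a := by
  induction k with
  | zero => simp
  | succ k ih =>
    rw [pow_succ', pow_succ', ← mul_assoc, ← mul_assoc, mul_assoc (a * b), ih, ← mul_assoc]

private lemma conj_pow' {α : Type*} (a w : FreeGroup α) (n : ℕ) :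
    (a⁻¹ * w * a) ^ n = a⁻¹ * w ^ n * a := by
  induction n with
  | zero => simp
  | succ n ih => rw [pow_succ, ih, pow_succ]; group

theorem stmt_3 {α : Type*} (X Y γ : FreeGroup α) (n : ℕ) (hn : 1 ≤ n)
    (I J K L : ℕ) (hIJ : I + J = n - 1) (hKL : K + L = n - 1)
    (hXY : X * Y ≠ 1)
    (hnp : ¬ ∃ (z : FreeGroup α) (k : ℤ), 2 ≤ |k| ∧ X * Y = z ^ k)
    (h1 : γ * (X * Y) ^ I * X * γ⁻¹ = (Y * X) ^ L * Y)
    (h2 : γ * (Y * X) ^ J * Y * γ⁻¹ = (X * Y) ^ K * X) :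
    ∃ (z : FreeGroup α) (m k : ℤ), X = z ^ m ∧ Y = z ^ k := by
  classical
  set w := X * Y with hw
  have hIJ1 : I + (J + 1) = n := by omega
  have hKL1 : L + (K + 1) = n := by omega
  -- A : X * (Y*X)^J * Y = w^(J+1)
  have hA : X * (Y * X) ^ J * Y = w ^ (J + 1) := by
    rw [shift, mul_assoc, ← hw, ← pow_succ]
  -- B : Y * w^K * X = (Y*X)^(K+1)
  have hB : Y * w ^ K * X = (Y * X) ^ (K + 1) := by
    rw [hw, shift, mul_assoc, ← pow_succ]
  -- key : γ * w^n * γ⁻¹ = (Y*X)^n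
  have key : γ * w ^ n * γ⁻¹ = (Y * X) ^ n := by
    have hm : (γ * w ^ I * X * γ⁻¹) * (γ * (Y * X) ^ J * Y * γ⁻¹)
        = ((Y * X) ^ L * Y) * (w ^ K * X) := by rw [h1, h2]
    have hl : (γ * w ^ I * X * γ⁻¹) * (γ * (Y * X) ^ J * Y * γ⁻¹)
        = γ * (w ^ I * (X * (Y * X) ^ J * Y)) * γ⁻¹ := by group
    have hr : ((Y * X) ^ L * Y) * (w ^ K * X) = (Y * X) ^ L * (Y * w ^ K * X) := by group
    rw [hl, hA, ← pow_add, hIJ1] at hm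
    rw [hr, hB, ← pow_add, hKL1] at hm
    exact hm
  have hyx : (Y * X) ^ n = X⁻¹ * w ^ n * X := by
    have h' : Y * X = X⁻¹ * w * X := by rw [hw]; group
    rw [h', conj_pow']
  have hu : (X * γ) * w ^ n = w ^ n * (X * γ) := by
    have hk := key.trans hyx
    have h' : X * (γ * w ^ n * γ⁻¹) * X⁻¹ = w ^ n := by rw [hk]; group
    calc (X * γ) * w ^ n = (X * (γ * w ^ n * γ⁻¹) * X⁻¹) * (X * γ) := by group
    _ = w ^ n * (X * γ) := by rw [h']
  have hn0 : (n : ℤ) ≠ 0 := by exact_mod_cast Nat.one_le_iff_ne_zero.mp hn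
  have hwn : w ^ n ≠ 1 := by
    intro h
    exact hXY (freeGroup_torsionfree (g := w) (k := (n : ℤ))
      (by rw [zpow_natCast]; exact h) hn0)
  have hww : w * w ^ n = w ^ n * w := ((Commute.refl w).pow_right n).eq
  obtain ⟨T, hT⟩ := pow_of_commute_with hXY hnp hwn hu hww
  -- star equation
  set s : ℤ := (L : ℤ) + 1 - I - T with hs
  have hstar : X * w ^ (-T) * X = w ^ s := by
    have r1 : X * ((Y * X) ^ L * Y) = w ^ (L + 1) := by
      rw [← mul_assoc, shift, mul_assoc, ← hw, ← pow_succ]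
    have e : (X * γ) * w ^ I * X * (X * γ)⁻¹ * X = w ^ (L + 1) := by
      calc (X * γ) * w ^ I * X * (X * γ)⁻¹ * X
          = X * (γ * w ^ I * X * γ⁻¹) := by group
      _ = X * ((Y * X) ^ L * Y) := by rw [h1]
      _ = w ^ (L + 1) := r1
    rw [hT] at e
    calc X * w ^ (-T) * X
        = (w ^ T * w ^ I)⁻¹ * (w ^ T * w ^ I * X * (w ^ T)⁻¹ * X) := by group
    _ = (w ^ T * w ^ I)⁻¹ * w ^ (L + 1) := by rw [e]
    _ = w ^ s := by rw [hs]; group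
  have hpp : (X * w ^ (-T)) * (X * w ^ (-T)) = w ^ (s - T) := by
    calc (X * w ^ (-T)) * (X * w ^ (-T)) = (X * w ^ (-T) * X) * w ^ (-T) := by group
    _ = w ^ s * w ^ (-T) := by rw [hstar]
    _ = w ^ (s - T) := by group
  by_cases hsT : s - T = 0
  · have hp1 : X * w ^ (-T) = 1 := by
      apply freeGroup_torsionfree (k := (2 : ℤ)) ?_ (by norm_num)
      rw [show (2 : ℤ) = 1 + 1 by norm_num, zpow_add, zpow_one, hpp, hsT, zpow_zero]
    have hX : X = w ^ T := by
      calc X = (X * w ^ (-T)) * w ^ T := by group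
      _ = w ^ T := by rw [hp1, one_mul]
    refine ⟨w, T, 1 - T, hX, ?_⟩
    have hY : Y = X⁻¹ * w := by rw [hw]; group
    rw [hY, hX]; group
  · have hne : w ^ (s - T) ≠ 1 := fun h => hXY (freeGroup_torsionfree h hsT)
    have hpc : (X * w ^ (-T)) * w ^ (s - T) = w ^ (s - T) * (X * w ^ (-T)) := by
      rw [← hpp]; group
    obtain ⟨B, hB⟩ := pow_of_commute_with hXY hnp hne hpc ((Commute.refl w).zpow_right _).eq
    have hX : X = w ^ (B + T) := by
      calc X = (X * w ^ (-T)) * w ^ T := by group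
      _ = w ^ B * w ^ T := by rw [hB]
      _ = w ^ (B + T) := (zpow_add w B T).symm
    refine ⟨w, B + T, 1 - (B + T), hX, ?_⟩
    have hY : Y = X⁻¹ * w := by rw [hw]; group
    rw [hY, hX]; group
end

section
/- Let F be a free group and let x ∈ F be nontrivial. Then there exists an element m ∈ F such that x lies in the cyclic subgroup generated by m (Subgroup.zpowers m), and for every z ∈ F with x in the cyclic subgroup generated by z, the cyclic subgroup generated by z is contained in the cyclic subgroup generated by m. -/
open FreeGroup Subgroup

private lemma list_const_of_cons_eq_append {β : Type*} :
    ∀ (t : List β) (c : β), c :: t = t ++ [c] → ∀ u ∈ t, u = c := by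
  intro t
  induction t with
  | nil => simp
  | cons d t ih =>
    intro c h u hu
    rw [List.cons_append] at h
    injection h with h1 h2
    subst h1
    rcases List.mem_cons.mp hu with rfl | hu
    · rfl
    · exact ih c h2 u hu

private lemma invRev_cons {α : Type*} (p : α × Bool) (L : List (α × Bool)) :
    invRev (p :: L) = invRev L ++ [(p.1, !p.2)] := by
  simp [invRev]

private lemma const_of_comm {α : Type*} [DecidableEq α] (x : FreeGroup α) (hx : x ≠ 1)
    (a : α) (hc : x * FreeGroup.of a = FreeGroup.of a * x) :
    ∃ s : Bool, ∀ u ∈ x.toWord, u = (a, s) := by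
  set w := x.toWord with hwdef
  have hw : reduce w = w := reduce_toWord x
  have hwne : w ≠ [] := fun h => hx (toWord_eq_nil_iff.mp h)
  set v := invRev w with hvdef
  have hv : reduce v = v := by rw [hvdef, reduce_invRev, hw]
  have hvw : invRev v = w := invRev_invRev
  have hvne : v ≠ [] := fun h => hwne (by rw [← hvw, h, invRev_empty])
  -- left side
  have hxmk : x = FreeGroup.mk w := (mk_toWord).symm
  have h1 : (FreeGroup.of a * x).toWord = reduce ((a, true) :: w) := by
    conv_lhs => rw [hxmk]
    rw [show FreeGroup.of a * FreeGroup.mk w = FreeGroup.mk ((a, true) :: w) from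
      (FreeGroup.mul_mk (L₁ := [(a, true)]) (L₂ := w)), toWord_mk]
  -- right side
  have h2 : (x * FreeGroup.of a).toWord = invRev (reduce ((a, false) :: v)) := by
    have e1 : (x * FreeGroup.of a)⁻¹ = FreeGroup.mk ((a, false) :: v) := by
      rw [mul_inv_rev, hxmk, FreeGroup.inv_mk,
        show (FreeGroup.of a)⁻¹ = FreeGroup.mk [(a, false)] from rfl,
        FreeGroup.mul_mk]
      rfl
    have e2 : ((x * FreeGroup.of a)⁻¹).toWord = invRev ((x * FreeGroup.of a).toWord) :=
      toWord_inv _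
    rw [e1, toWord_mk] at e2
    rw [← invRev_invRev (L₁ := (x * FreeGroup.of a).toWord), ← e2]
  have E : invRev (reduce ((a, false) :: v)) = reduce ((a, true) :: w) := by
    rw [← h1, ← h2, hc]
  obtain ⟨⟨c, d⟩, t, hwt⟩ := List.exists_cons_of_ne_nil hwne
  obtain ⟨⟨c', d'⟩, t', hvt⟩ := List.exists_cons_of_ne_nil hvne
  have hA : reduce ((a, true) :: w) =
      if a = c ∧ true = !d then t else (a, true) :: (c, d) :: t := by
    rw [reduce.cons, hw, hwt]
  have hB : reduce ((a, false) :: v) =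
      if a = c' ∧ false = !d' then t' else (a, false) :: (c', d') :: t' := by
    rw [reduce.cons, hv, hvt]
  rw [hA, hB] at E
  by_cases hP : a = c ∧ true = !d <;> by_cases hQ : a = c' ∧ false = !d'
  · -- both cancel: w is constant (a, false)
    rw [if_pos hP, if_pos hQ] at E
    obtain ⟨rfl, hd⟩ := hP
    obtain ⟨rfl, hd'⟩ := hQ
    have hd : d = false := by simpa using hd.symm
    have hd' : d' = true := by simpa using hd'.symm
    subst hd; subst hd'
    have hwform : w = t ++ [(a, false)] := by
      rw [← hvw, hvt, _root_.invRev_cons, E]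
      rfl
    refine ⟨false, ?_⟩
    intro u hu
    rw [hwt] at hu
    rcases List.mem_cons.mp hu with rfl | hu
    · rfl
    · exact list_const_of_cons_eq_append t (a, false) (by rw [← hwt, hwform]) u hu
  · -- length contradiction
    exfalso
    rw [if_pos hP, if_neg hQ] at E
    have := congrArg List.length E
    simp only [invRev_length, List.length_cons] at this
    have hlw : w.length = t.length + 1 := by rw [hwt]; simp
    have hlv : v.length = t'.length + 1 := by rw [hvt]; simp
    have hlvw : v.length = w.length := by rw [hvdef, invRev_length]
    omega
  · exfalso
    rw [if_neg hP, if_pos hQ] at E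
    have := congrArg List.length E
    simp only [invRev_length, List.length_cons] at this
    have hlw : w.length = t.length + 1 := by rw [hwt]; simp
    have hlv : v.length = t'.length + 1 := by rw [hvt]; simp
    have hlvw : v.length = w.length := by rw [hvdef, invRev_length]
    omega
  · -- neither cancels: w is constant (a, true)
    rw [if_neg hP, if_neg hQ] at E
    rw [_root_.invRev_cons, ← hvt, hvw, hwt] at E
    refine ⟨true, ?_⟩
    rw [hwt]
    exact list_const_of_cons_eq_append _ _ (show _ = _ from E.symm)

private lemma cyclic_of_central_free {S : Type*} [DecidableEq S] (x : FreeGroup S) (hx : x ≠ 1)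
    (hc : ∀ g, x * g = g * x) :
    ∃ m : FreeGroup S, ∀ h : FreeGroup S, h ∈ Subgroup.zpowers m := by
  have hwne : x.toWord ≠ [] := fun h => hx (toWord_eq_nil_iff.mp h)
  obtain ⟨⟨a, s0⟩, t, hwt⟩ := List.exists_cons_of_ne_nil hwne
  have key : ∀ b : S, b = a := by
    intro b
    obtain ⟨s, hs⟩ := const_of_comm x hx b (hc _)
    have := hs (a, s0) (by rw [hwt]; exact List.mem_cons_self)
    exact ((Prod.mk.injEq _ _ _ _).mp this).1.symm
  refine ⟨FreeGroup.of a, fun h => ?_⟩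
  induction h using FreeGroup.induction_on with
  | C1 => exact one_mem _
  | of b =>
    have : FreeGroup.of b = FreeGroup.of a := by rw [key b]
    rw [this]; exact Subgroup.mem_zpowers _
  | inv_of b hb => exact inv_mem hb
  | mul y z hy hz => exact mul_mem hy hz

private lemma cyclic_of_central {G : Type*} [Group G] [IsFreeGroup G] (x : G) (hx : x ≠ 1)
    (hc : ∀ g, x * g = g * x) : ∃ m : G, ∀ h : G, h ∈ Subgroup.zpowers m := by
  obtain ⟨ι, ⟨b⟩⟩ := IsFreeGroup.nonempty_basis (G := G)
  classical
  have hx' : b.repr x ≠ 1 := fun h => hx (by simpa using b.repr.injective (by simp [h]))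
  have hc' : ∀ g', b.repr x * g' = g' * b.repr x := by
    intro g'
    rw [← b.repr.apply_symm_apply g', ← _root_.map_mul, hc, _root_.map_mul]
  obtain ⟨m', hm'⟩ := cyclic_of_central_free (b.repr x) hx' hc'
  refine ⟨b.repr.symm m', fun h => ?_⟩
  obtain ⟨k, hk⟩ := Subgroup.mem_zpowers_iff.mp (hm' (b.repr h))
  exact Subgroup.mem_zpowers_iff.mpr ⟨k, by rw [← map_zpow, hk, MulEquiv.symm_apply_apply]⟩

theorem stmt_7 {α : Type*} (x : FreeGroup α) (hx : x ≠ 1) :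
    ∃ m : FreeGroup α, x ∈ Subgroup.zpowers m ∧
      ∀ z : FreeGroup α, x ∈ Subgroup.zpowers z →
        Subgroup.zpowers z ≤ Subgroup.zpowers m := by
  set C := Subgroup.centralizer ({x} : Set (FreeGroup α)) with hC
  have hxC : x ∈ C := Subgroup.mem_centralizer_iff.mpr (by
    intro g hg; rw [Set.mem_singleton_iff] at hg; rw [hg])
  set xC : C := ⟨x, hxC⟩ with hxCdef
  have hxC1 : xC ≠ 1 := fun h => hx (congrArg Subtype.val h)
  have hcent : ∀ g : C, xC * g = g * xC := by
    intro g
    exact Subtype.ext ((Subgroup.mem_centralizer_iff.mp g.2) x rfl)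
  obtain ⟨m₀, hm₀⟩ := cyclic_of_central xC hxC1 hcent
  refine ⟨(m₀ : FreeGroup α), ?_, ?_⟩
  · obtain ⟨k, hk⟩ := Subgroup.mem_zpowers_iff.mp (hm₀ xC)
    refine Subgroup.mem_zpowers_iff.mpr ⟨k, ?_⟩
    have := congrArg Subtype.val hk
    simpa using this
  · intro z hz
    rw [Subgroup.zpowers_le]
    obtain ⟨n, hn⟩ := Subgroup.mem_zpowers_iff.mp hz
    have hzC : z ∈ C := Subgroup.mem_centralizer_iff.mpr (by
      intro g hg
      rw [Set.mem_singleton_iff] at hg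
      subst hg
      rw [← hn, ← zpow_add_one, ← zpow_one_add, add_comm])
    obtain ⟨k, hk⟩ := Subgroup.mem_zpowers_iff.mp (hm₀ ⟨z, hzC⟩)
    refine Subgroup.mem_zpowers_iff.mpr ⟨k, ?_⟩
    have := congrArg Subtype.val hk
    simpa using this
end

section
/- In the free group F₄ on four generators a₁, a₂, a₃, a₄, let w = a₂⁻¹a₃a₁a₂⁻¹a₃a₁a₂⁻¹. For every element s ∈ F₄ that commutes with w, one has s·(a₂⁻¹a₂⁻¹a₃a₁)·s⁻¹ ≠ a₃a₁a₂⁻¹a₂⁻¹. -/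
set_option maxRecDepth 10000


/-- The generators of the free group on four generators:
`a 0 = a₁`, `a 1 = a₂`, `a 2 = a₃`, `a 3 = a₄`. -/
def a (i : Fin 4) : FreeGroup (Fin 4) := FreeGroup.of i

private def pA : Equiv.Perm (Fin 5) :=
  ⟨![0,1,2,4,3], ![0,1,2,4,3], by decide, by decide⟩

private def pB : Equiv.Perm (Fin 5) :=
  ⟨![4,2,3,0,1], ![3,4,1,2,0], by decide, by decide⟩

private def pC : Equiv.Perm (Fin 5) :=
  ⟨![2,0,1,3,4], ![1,2,0,3,4], by decide, by decide⟩

private def f : Fin 4 → Equiv.Perm (Fin 5) := ![pA, pB, pC, 1]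

theorem stmt_11 (s : FreeGroup (Fin 4))
    (hs : Commute s ((a 1)⁻¹ * a 2 * a 0 * (a 1)⁻¹ * a 2 * a 0 * (a 1)⁻¹)) :
    s * ((a 1)⁻¹ * (a 1)⁻¹ * a 2 * a 0) * s⁻¹ ≠
      a 2 * a 0 * (a 1)⁻¹ * (a 1)⁻¹ := by
  intro h
  have key : ∀ t : Equiv.Perm (Fin 5),
      t * ((f 1)⁻¹ * f 2 * f 0 * (f 1)⁻¹ * f 2 * f 0 * (f 1)⁻¹) = ((f 1)⁻¹ * f 2 * f 0 * (f 1)⁻¹ * f 2 * f 0 * (f 1)⁻¹) * t →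
      t * ((f 1)⁻¹ * (f 1)⁻¹ * f 2 * f 0) * t⁻¹ ≠
        f 2 * f 0 * (f 1)⁻¹ * (f 1)⁻¹ := by decide
  have hc := hs.map (FreeGroup.lift f)
  have h2 := congrArg (FreeGroup.lift f) h
  simp only [map_mul, map_inv, a, FreeGroup.lift_apply_of] at hc h2
  exact key _ hc h2
end
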